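/- arXiv:2309.13733 — 2 statements merged into one kernel-verified Lean document; each statement's English description precedes it below -/
import Mathlib

section
/- Fix X, Hₖ, Wₖ and define g(W, H) = √(rₖ) + (‖X - WH‖_F² + ε - rₖ)/(2√rₖ) + λ[log det(Qₖ) + trace(Qₖ⁻¹(WᵀW + δI - Qₖ))], where rₖ = ‖X - WₖHₖ‖_F² + ε and Qₖ = WₖᵀWₖ + δI with δ > 0, λ ≥ 0, ε > 0. Then g(W, H) ≥ f_ε(W, H) for all nonnegative W, H, where f_ε(W, H) = √(‖X - WH‖_F² + ε) + λ·log det(WᵀW + δI), and g(Wₖ, Hₖ) = f_ε(Wₖ, Hₖ). -/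
open Matrix
noncomputable def frobNorm2 {m n : ℕ} (M : Matrix (Fin m) (Fin n) ℝ) : ℝ :=
  ∑ i, ∑ j, (M i j) ^ 2


lemma logdet_le_trace {r : ℕ} (A : Matrix (Fin r) (Fin r) ℝ) (hA : A.PosSemidef)
    (hdet : 0 < A.det) : Real.log A.det ≤ A.trace - r := by
  have hH : A.IsHermitian := hA.isHermitian
  have hdetp : A.det = ∏ i, hH.eigenvalues i := by
    simpa using hH.det_eq_prod_eigenvalues
  have hpos : ∀ i, 0 < hH.eigenvalues i := by
    intro i
    rcases lt_or_eq_of_le (hA.eigenvalues_nonneg i) with h | h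
    · exact h
    · exfalso
      rw [hdetp] at hdet
      exact absurd (Finset.prod_eq_zero (Finset.mem_univ i) h.symm) (ne_of_gt hdet)
  have htr : A.trace = ∑ i, hH.eigenvalues i := by
    simpa using hH.trace_eq_sum_eigenvalues
  rw [hdetp, Real.log_prod (fun i _ => (hpos i).ne'), htr]
  calc ∑ i, Real.log (hH.eigenvalues i) ≤ ∑ i, (hH.eigenvalues i - 1) :=
        Finset.sum_le_sum fun i _ => Real.log_le_sub_one_of_pos (hpos i)
    _ = (∑ i, hH.eigenvalues i) - r := by
        rw [Finset.sum_sub_distrib]; simp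

open scoped MatrixOrder in
lemma logdet_concave {r : ℕ} (Q Qk : Matrix (Fin r) (Fin r) ℝ)
    (hQ : Q.PosDef) (hQk : Qk.PosDef) :
    Real.log Q.det ≤ Real.log Qk.det + (Qk⁻¹ * (Q - Qk)).trace := by
  have hQkd : 0 < Qk.det := hQk.det_pos
  have hQd : 0 < Q.det := hQ.det_pos
  have hQki : Qk⁻¹.PosDef := hQk.inv
  set S := CFC.sqrt Qk⁻¹ with hSdef
  have hS : S.PosSemidef := (CFC.sqrt_nonneg Qk⁻¹).posSemidef
  have hSS : S * S = Qk⁻¹ := CFC.sqrt_mul_sqrt_self Qk⁻¹ hQki.posSemidef.nonneg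
  have hA : (S * Q * S).PosSemidef := by
    have := hQ.posSemidef.mul_mul_conjTranspose_same S
    rwa [hS.isHermitian.eq] at this
  have hdetA : (S * Q * S).det = Q.det / Qk.det := by
    rw [Matrix.det_mul, Matrix.det_mul]
    have : S.det * S.det = Qk.det⁻¹ := by
      rw [← Matrix.det_mul, hSS, Matrix.det_nonsing_inv]
      simp [Ring.inverse_eq_inv]
    rw [mul_comm S.det Q.det, mul_assoc, this, div_eq_mul_inv]
  have hdA : 0 < (S * Q * S).det := by rw [hdetA]; positivity
  have htrA : (S * Q * S).trace = (Qk⁻¹ * Q).trace := by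
    rw [Matrix.trace_mul_cycle, hSS]
  have key := logdet_le_trace _ hA hdA
  rw [hdetA, Real.log_div (ne_of_gt hQd) (ne_of_gt hQkd), htrA] at key
  have htr2 : (Qk⁻¹ * (Q - Qk)).trace = (Qk⁻¹ * Q).trace - r := by
    rw [Matrix.mul_sub, Matrix.trace_sub, Matrix.nonsing_inv_mul _ hQkd.ne'.isUnit]
    simp [Matrix.trace_one]
  rw [htr2]
  linarith

lemma posdef_gram {m r : ℕ} (W : Matrix (Fin m) (Fin r) ℝ) {δ : ℝ} (hδ : 0 < δ) :
    (Wᵀ * W + δ • (1 : Matrix (Fin r) (Fin r) ℝ)).PosDef := by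
  have h1 : (Wᵀ * W).PosSemidef := by
    have := Matrix.posSemidef_conjTranspose_mul_self W
    rwa [conjTranspose_eq_transpose_of_trivial] at this
  have h2 : (δ • (1 : Matrix (Fin r) (Fin r) ℝ)).PosDef := by
    rw [Matrix.smul_one_eq_diagonal]
    exact Matrix.PosDef.diagonal fun _ => hδ
  exact Matrix.PosDef.posSemidef_add h1 h2

theorem mm_majorization_prop {m n r : ℕ} (X : Matrix (Fin m) (Fin n) ℝ)
    (Wk : Matrix (Fin m) (Fin r) ℝ) (Hk : Matrix (Fin r) (Fin n) ℝ)
    (δ lam ε : ℝ) (hδ : 0 < δ) (hlam : 0 ≤ lam) (hε : 0 < ε)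
    (fε : Matrix (Fin m) (Fin r) ℝ → Matrix (Fin r) (Fin n) ℝ → ℝ)
    (hfε : ∀ W H, fε W H =
      Real.sqrt (frobNorm2 (X - W * H) + ε) +
        lam * Real.log (Wᵀ * W + δ • (1 : Matrix (Fin r) (Fin r) ℝ)).det)
    (rk : ℝ) (hrk : rk = frobNorm2 (X - Wk * Hk) + ε)
    (Qk : Matrix (Fin r) (Fin r) ℝ)
    (hQk : Qk = Wkᵀ * Wk + δ • (1 : Matrix (Fin r) (Fin r) ℝ))
    (g : Matrix (Fin m) (Fin r) ℝ → Matrix (Fin r) (Fin n) ℝ → ℝ)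
    (hg : ∀ W H, g W H =
      Real.sqrt rk + (frobNorm2 (X - W * H) + ε - rk) / (2 * Real.sqrt rk) +
        lam * (Real.log Qk.det +
          (Qk⁻¹ * (Wᵀ * W + δ • (1 : Matrix (Fin r) (Fin r) ℝ) - Qk)).trace)) :
    (∀ W H, (∀ i j, 0 ≤ W i j) → (∀ i j, 0 ≤ H i j) → fε W H ≤ g W H) ∧
      g Wk Hk = fε Wk Hk := by
  have hfrob : ∀ (A : Matrix (Fin m) (Fin n) ℝ), 0 ≤ frobNorm2 A := fun A =>
    Finset.sum_nonneg fun i _ => Finset.sum_nonneg fun j _ => sq_nonneg _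
  have hrk0 : 0 < rk := by have := hfrob (X - Wk * Hk); rw [hrk]; linarith
  have hs : 0 < Real.sqrt rk := Real.sqrt_pos.mpr hrk0
  have hQkpd : Qk.PosDef := by rw [hQk]; exact posdef_gram Wk hδ
  constructor
  · intro W H _ _
    rw [hfε, hg]
    have hQ := posdef_gram W hδ
    have h2 : lam * Real.log (Wᵀ * W + δ • (1 : Matrix (Fin r) (Fin r) ℝ)).det ≤
        lam * (Real.log Qk.det +
          (Qk⁻¹ * (Wᵀ * W + δ • (1 : Matrix (Fin r) (Fin r) ℝ) - Qk)).trace) :=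
      mul_le_mul_of_nonneg_left (logdet_concave _ _ hQ hQkpd) hlam
    have h1 : Real.sqrt (frobNorm2 (X - W * H) + ε) ≤
        Real.sqrt rk + (frobNorm2 (X - W * H) + ε - rk) / (2 * Real.sqrt rk) := by
      set y := frobNorm2 (X - W * H) + ε with hy
      have hy0 : 0 ≤ y := by have := hfrob (X - W * H); rw [hy]; linarith
      have hsy : Real.sqrt y ^ 2 = y := Real.sq_sqrt hy0
      have hsr : Real.sqrt rk ^ 2 = rk := Real.sq_sqrt hrk0.le
      have hnn : 0 ≤ (Real.sqrt y - Real.sqrt rk) ^ 2 := sq_nonneg _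
      rw [← sub_nonneg]
      have hE : Real.sqrt rk + (y - rk) / (2 * Real.sqrt rk) - Real.sqrt y =
          (Real.sqrt y - Real.sqrt rk) ^ 2 / (2 * Real.sqrt rk) := by
        field_simp
        nlinarith [hsy, hsr]
      rw [hE]
      positivity
    linarith
  · rw [hg, hfε, ← hrk, ← hQk]
    simp
end

section
/- Suppose P is symmetric positive definite and Q is symmetric positive definite, and log det Q = log det P + trace(P⁻¹(Q - P)). Then Q = P. -/
open Matrix
open scoped MatrixOrder

lemma trace_eq_sum_eig {n : ℕ} {A : Matrix (Fin n) (Fin n) ℝ} (hA : A.IsHermitian) :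
    A.trace = ∑ i, hA.eigenvalues i := by
  conv_lhs => rw [hA.spectral_theorem, Unitary.conjStarAlgAut_apply]
  rw [Matrix.trace_mul_comm, ← Matrix.mul_assoc]
  have h1 : (star hA.eigenvectorUnitary : Matrix (Fin n) (Fin n) ℝ) *
      (hA.eigenvectorUnitary : Matrix (Fin n) (Fin n) ℝ) = 1 := by
    exact_mod_cast Unitary.coe_star_mul_self hA.eigenvectorUnitary
  rw [h1, Matrix.one_mul, Matrix.trace_diagonal]
  simp

theorem logdet_tangent_equality_case {n : ℕ} (P Q : Matrix (Fin n) (Fin n) ℝ)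
    (hP : P.PosDef) (hQ : Q.PosDef)
    (heq : Real.log Q.det = Real.log P.det + (P⁻¹ * (Q - P)).trace) :
    Q = P := by
  have hPs : P.PosSemidef := hP.posSemidef
  set R := CFC.sqrt P with hRdef
  have hRR : R * R = P := CFC.sqrt_mul_sqrt_self P hPs.nonneg
  have hRherm : R.IsHermitian := (CFC.sqrt_nonneg P).posSemidef.1
  have hRdet : R.det ≠ 0 := by
    intro h
    have : P.det = 0 := by rw [← hRR, Matrix.det_mul, h, mul_zero]
    exact (hP.det_pos).ne' this
  have hRunit : IsUnit R := isUnit_iff_isUnit_det R |>.mpr (isUnit_iff_ne_zero.mpr hRdet)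
  have hRinv : R * R⁻¹ = 1 := mul_nonsing_inv R (isUnit_iff_ne_zero.mpr hRdet)
  have hRinv' : R⁻¹ * R = 1 := nonsing_inv_mul R (isUnit_iff_ne_zero.mpr hRdet)
  -- S = R⁻¹ Q R⁻¹
  set S := R⁻¹ * Q * R⁻¹ with hSdef
  have hRinvherm : (R⁻¹).IsHermitian := by
    rw [Matrix.IsHermitian, Matrix.conjTranspose_nonsing_inv, hRherm.eq]
  have hSsemi : S.PosSemidef := by
    have := hQ.posSemidef.mul_mul_conjTranspose_same R⁻¹
    rwa [hRinvherm.eq] at this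
  -- det S
  have hPinv : P⁻¹ = R⁻¹ * R⁻¹ := by rw [← hRR, Matrix.mul_inv_rev]
  have hdetS : S.det = Q.det / P.det := by
    rw [hSdef, Matrix.det_mul, Matrix.det_mul, det_nonsing_inv, ← hRR, Matrix.det_mul]
    rw [Ring.inverse_eq_inv']
    field_simp
  have hdetSpos : 0 < S.det := by
    rw [hdetS]; exact div_pos hQ.det_pos hP.det_pos
  -- trace S = trace (P⁻¹ Q)
  have htrS : S.trace = (P⁻¹ * Q).trace := by
    rw [hPinv, hSdef, Matrix.trace_mul_comm, ← Matrix.mul_assoc]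
  -- rewrite heq : log det S = trace S - n
  have hPP : (P⁻¹ * P) = 1 := nonsing_inv_mul P (isUnit_iff_ne_zero.mpr hP.det_pos.ne')
  have heq2 : Real.log S.det = S.trace - n := by
    rw [hdetS, Real.log_div hQ.det_pos.ne' hP.det_pos.ne', htrS]
    have : (P⁻¹ * (Q - P)).trace = (P⁻¹ * Q).trace - n := by
      rw [Matrix.mul_sub, Matrix.trace_sub, hPP, Matrix.trace_one]
      simp
    rw [this] at heq
    linarith
  -- eigenvalues
  set μ := hSsemi.1.eigenvalues with hμdef
  have hμnonneg : ∀ i, 0 ≤ μ i := hSsemi.eigenvalues_nonneg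
  have hdet_prod : S.det = ∏ i, μ i := by
    have := hSsemi.1.det_eq_prod_eigenvalues
    exact_mod_cast this
  have hμpos : ∀ i, 0 < μ i := by
    intro i
    rcases lt_or_eq_of_le (hμnonneg i) with h | h
    · exact h
    · exfalso
      have : S.det = 0 := by
        rw [hdet_prod]
        exact Finset.prod_eq_zero (Finset.mem_univ i) h.symm
      exact hdetSpos.ne' this
  have htr_sum : S.trace = ∑ i, μ i := trace_eq_sum_eig hSsemi.1
  have hlog : Real.log S.det = ∑ i, Real.log (μ i) := by
    rw [hdet_prod, Real.log_prod (fun i _ => (hμpos i).ne')]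
  -- sum of nonneg terms equal zero
  have hsum0 : ∑ i, (μ i - 1 - Real.log (μ i)) = 0 := by
    have : ∑ i, (μ i - 1 - Real.log (μ i)) = S.trace - n - Real.log S.det := by
      rw [htr_sum, hlog]
      simp [Finset.sum_sub_distrib]
    rw [this, heq2]; ring
  have hμone : ∀ i, μ i = 1 := by
    intro i
    by_contra hne
    have hlt : Real.log (μ i) < μ i - 1 := Real.log_lt_sub_one_of_pos (hμpos i) hne
    have hpos : 0 < ∑ j, (μ j - 1 - Real.log (μ j)) := by
      apply Finset.sum_pos' (fun j _ => by linarith [Real.log_le_sub_one_of_pos (hμpos j)])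
      exact ⟨i, Finset.mem_univ i, by linarith⟩
    linarith [hsum0]
  -- S = 1
  have hS1 : S = 1 := by
    have hspec := hSsemi.1.spectral_theorem
    have hdiag : Matrix.diagonal (RCLike.ofReal ∘ μ) = (1 : Matrix (Fin n) (Fin n) ℝ) := by
      ext i j
      simp [Matrix.diagonal_apply, Matrix.one_apply, hμone]
    rw [hdiag] at hspec
    rw [hspec, Unitary.conjStarAlgAut_apply, Matrix.mul_one]
    exact_mod_cast Unitary.coe_mul_star_self hSsemi.1.eigenvectorUnitary
  -- conclude
  have : R * S * R = Q := by
    rw [hSdef, ← Matrix.mul_assoc, ← Matrix.mul_assoc, hRinv, Matrix.one_mul,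
      Matrix.mul_assoc, hRinv', Matrix.mul_one]
  rw [hS1, Matrix.mul_one, hRR] at this
  exact this.symm
end
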